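/- Assume (q), let f ∈ C¹[0,1] with f(0)=0, h := f′, let c* be the threshold for problem (P_c⁰⁰), and for c > c* let β(c) < 0 be the minimal value b such that (P_c) with z(1) = b is solvable. Then: (i) β(c₂) < β(c₁) for all c₂ > c₁ > c*; (ii) β(c) → −∞ as c → +∞. -/

import Mathlib

open Set Filter Topology MeasureTheory

noncomputable section

/-- `z` is a solution of the singular first-order ODE ż(φ) = h(φ) − c − q(φ)/z(φ)
on (0,1), negative on (0,1), and continuous on [0,1]. -/
def SolODE (h q : ℝ → ℝ) (c : ℝ) (z : ℝ → ℝ) : Prop :=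
  ContinuousOn z (Icc 0 1) ∧
  (∀ φ ∈ Ioo (0:ℝ) 1, HasDerivAt z (h φ - c - q φ / z φ) φ) ∧
  (∀ φ ∈ Ioo (0:ℝ) 1, z φ < 0)

/-- Problem (P_c): the singular ODE with the left boundary condition z(0) = 0. -/
def PC (h q : ℝ → ℝ) (c : ℝ) (z : ℝ → ℝ) : Prop :=
  SolODE h q c z ∧ z 0 = 0

/-- Problem (P_c⁰⁰): the singular ODE with the two boundary conditions z(0) = z(1) = 0. -/
def PC00 (h q : ℝ → ℝ) (c : ℝ) (z : ℝ → ℝ) : Prop :=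
  PC h q c z ∧ z 1 = 0

/-- If `D` has a negative right-derivative at `s` and `D s = 0`, then `D < 0` just right of `s`. -/
lemma eventually_neg_right {D : ℝ → ℝ} {s d : ℝ}
    (hD : HasDerivWithinAt D d (Ici s) s) (hd : d < 0) (h0 : D s = 0) :
    ∀ᶠ u in 𝓝[>] s, D u < 0 := by
  have hslope : Tendsto (slope D s) (𝓝[>] s) (𝓝 d) := by
    have := hasDerivWithinAt_iff_tendsto_slope.1 hD
    have hset : Ici s \ {s} = Ioi s := by
      exact Ici_sdiff_left
    rwa [hset] at this
  have hev : ∀ᶠ u in 𝓝[>] s, slope D s u < 0 := hslope.eventually_lt_const hd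
  filter_upwards [hev, self_mem_nhdsWithin] with u hu hu'
  rw [mem_Ioi] at hu'
  have : slope D s u = (D u - D s) / (u - s) := slope_def_field D s u
  rw [this, h0, sub_zero] at hu
  have := mul_neg_of_neg_of_pos hu (sub_pos.2 hu')
  rwa [div_mul_cancel₀] at this
  exact ne_of_gt (sub_pos.2 hu')

/-- Barrier lemma: if `D` is continuous on `[a,1]`, positive at `1`, and has a negative
right-derivative at any zero in `[a,1)`, then `D > 0` on `[a,1]`. -/
lemma barrier_pos {D : ℝ → ℝ} {a : ℝ} (ha : a < 1)
    (hD : ContinuousOn D (Icc a 1)) (hD1 : 0 < D 1)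
    (key : ∀ s ∈ Ico a 1, D s = 0 → ∃ d, HasDerivWithinAt D d (Ici s) s ∧ d < 0) :
    ∀ s ∈ Icc a 1, 0 < D s := by
  by_contra hc
  push_neg at hc
  obtain ⟨s₀, hs₀, hs₀le⟩ := hc
  set T : Set ℝ := {u | u ∈ Icc a 1 ∧ D u ≤ 0} with hT
  have hTne : T.Nonempty := ⟨s₀, hs₀, hs₀le⟩
  have hTbdd : BddAbove T := ⟨1, fun u hu => hu.1.2⟩
  have hTclosed : IsClosed T := by
    have : T = Icc a 1 ∩ D ⁻¹' (Iic 0) := by ext u; simp [hT, mem_inter_iff, mem_preimage]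
    rw [this]
    exact hD.preimage_isClosed_of_isClosed isClosed_Icc isClosed_Iic
  have hts : sSup T ∈ T := hTclosed.csSup_mem hTne hTbdd
  set t := sSup T with htdef
  have ht1 : t ≠ 1 := fun hh => absurd hD1 (by rw [← hh]; exact not_lt.2 hts.2)
  have htmem : t ∈ Ico a 1 := ⟨hts.1.1, lt_of_le_of_ne hts.1.2 ht1⟩
  -- D t = 0
  have hDt : D t = 0 := by
    rcases lt_or_eq_of_le hts.2 with hlt | heq
    · -- D t < 0 : IVT gives a zero above t
      have := intermediate_value_Ioo (le_of_lt htmem.2) (hD.mono (Icc_subset_Icc htmem.1 le_rfl))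
      have h0mem : (0:ℝ) ∈ Ioo (D t) (D 1) := ⟨hlt, hD1⟩
      obtain ⟨u, hu, hDu⟩ := this h0mem
      have : u ∈ T := ⟨⟨le_trans htmem.1 (le_of_lt hu.1), le_of_lt hu.2⟩, le_of_eq hDu⟩
      exact absurd (le_csSup hTbdd this) (not_le.2 hu.1)
    · exact heq
  obtain ⟨d, hder, hdneg⟩ := key t htmem hDt
  have hev := eventually_neg_right hder hdneg hDt
  have hev2 : ∀ᶠ u in 𝓝[>] t, u < 1 := by
    refine eventually_nhdsWithin_of_eventually_nhds ?_
    exact tendsto_id.eventually_lt_const htmem.2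
  obtain ⟨u, hu1, hu2, hu3⟩ := (hev.and (hev2.and self_mem_nhdsWithin)).exists
  have : u ∈ T := ⟨⟨le_trans hts.1.1 (le_of_lt hu3), le_of_lt hu2⟩, le_of_lt hu1⟩
  exact absurd (le_csSup hTbdd this) (not_le.2 hu3)


/-- Lipschitz bound for `z ↦ A - Q/z` on `Iic (-δ)`. -/
lemma lipschitz_field {A Qt δ MQ : ℝ} (hδ : 0 < δ) (hQt : |Qt| ≤ MQ) :
    LipschitzOnWith (Real.toNNReal (MQ / δ ^ 2)) (fun z => A - Qt / z) (Iic (-δ)) := by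
  rw [lipschitzOnWith_iff_dist_le_mul]
  intro x hx y hy
  rw [mem_Iic] at hx hy
  have hx0 : x < 0 := lt_of_le_of_lt hx (by linarith)
  have hy0 : y < 0 := lt_of_le_of_lt hy (by linarith)
  have hxy : δ ^ 2 ≤ x * y := by nlinarith
  have hMQ : 0 ≤ MQ := le_trans (abs_nonneg _) hQt
  have hcoe : ((Real.toNNReal (MQ / δ ^ 2)) : ℝ) = MQ / δ ^ 2 :=
    Real.coe_toNNReal _ (div_nonneg hMQ (by positivity))
  rw [hcoe, Real.dist_eq, Real.dist_eq]
  have hkey : (A - Qt / x) - (A - Qt / y) = Qt * (x - y) / (x * y) := by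
    have hx' : x ≠ 0 := ne_of_lt hx0
    have hy' : y ≠ 0 := ne_of_lt hy0
    field_simp
    ring
  rw [hkey, abs_div, abs_mul]
  rw [abs_of_pos (by nlinarith : (0:ℝ) < x * y)]
  rw [div_le_iff₀ (by nlinarith : (0:ℝ) < x * y)]
  have h1 : |Qt| * |x - y| ≤ MQ * |x - y| := by
    apply mul_le_mul_of_nonneg_right hQt (abs_nonneg _)
  calc |Qt| * |x - y| ≤ MQ * |x - y| := h1
    _ = MQ / δ ^ 2 * |x - y| * δ ^ 2 := by field_simp
    _ ≤ MQ / δ ^ 2 * |x - y| * (x * y) := by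
        apply mul_le_mul_of_nonneg_left hxy (by positivity)

/-- Local existence for the ODE `ẋ = H t - c - Q t / x` near a point with `x₀ < 0`. -/
lemma pl_step {H Q : ℝ → ℝ} {c : ℝ} (hH : Continuous H) (hQ : Continuous Q)
    {Mh MQ : ℝ} (hMh : ∀ t, |H t| ≤ Mh) (hMQ : ∀ t, |Q t| ≤ MQ)
    (t₀ x₀ ρ : ℝ) (hx₀ : x₀ < 0) (hρ : 0 < ρ) :
    ∃ r : ℝ, 0 < r ∧ r ≤ ρ ∧ ∃ x : ℝ → ℝ, x t₀ = x₀ ∧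
      ∀ t ∈ Icc (t₀ - r) (t₀ + r),
        HasDerivWithinAt x (H t - c - Q t / x t) (Icc (t₀ - r) (t₀ + r)) t := by
  set R : ℝ := -x₀ / 2 with hRdef
  have hR0 : 0 < R := by simp [hRdef]; linarith
  have hMh0 : 0 ≤ Mh := le_trans (abs_nonneg _) (hMh 0)
  have hMQ0 : 0 ≤ MQ := le_trans (abs_nonneg _) (hMQ 0)
  set C : ℝ := Mh + |c| + MQ / R with hCdef
  have hC0 : 0 ≤ C := by positivity
  set r : ℝ := min ρ (R / (C + 1)) with hrdef
  have hr0 : 0 < r := lt_min hρ (by positivity)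
  have hrρ : r ≤ ρ := min_le_left _ _
  have hball : Metric.closedBall x₀ R ⊆ Iic (-R) := by
    intro z hz
    rw [Real.closedBall_eq_Icc] at hz
    rw [mem_Iic]
    have : x₀ + R = -R := by rw [hRdef]; ring
    linarith [hz.2]
  have hzneg : ∀ z ∈ Metric.closedBall x₀ R, z ≤ -R := fun z hz => hball hz
  have hmemt : t₀ ∈ Icc (t₀ - r) (t₀ + r) := ⟨by linarith, by linarith⟩
  have hRc : ((Real.toNNReal R : ℝ)) = R := Real.coe_toNNReal _ hR0.le
  have hCc : ((Real.toNNReal C : ℝ)) = C := Real.coe_toNNReal _ hC0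
  have hpl : IsPicardLindelof (fun t z => H t - c - Q t / z) (tmin := t₀ - r) (tmax := t₀ + r)
      ⟨t₀, hmemt⟩ x₀ (Real.toNNReal R) 0 (Real.toNNReal C) (Real.toNNReal (MQ / R ^ 2)) := by
    constructor
    · intro t _
      rw [hRc]
      exact (lipschitz_field hR0 (hMQ t)).mono hball
    · intro z _
      exact ((hH.sub continuous_const).sub (hQ.div_const z)).continuousOn
    · intro t _ z hz
      rw [hRc] at hz
      rw [hCc]
      have hzR : z ≤ -R := hzneg z hz
      have hz0 : z < 0 := lt_of_le_of_lt hzR (by linarith)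
      have habs : |Q t / z| ≤ MQ / R := by
        rw [abs_div]
        apply div_le_div₀ hMQ0 (hMQ t) hR0
        rw [abs_of_neg hz0]; linarith
      calc ‖H t - c - Q t / z‖ = |H t - c - Q t / z| := rfl
        _ ≤ |H t - c| + |Q t / z| := abs_sub _ _
        _ ≤ (|H t| + |c|) + MQ / R := add_le_add (abs_sub _ _) habs
        _ ≤ C := by rw [hCdef]; linarith [hMh t]
    · have hmax : max (t₀ + r - t₀) (t₀ - (t₀ - r)) = r := by
        simp
      show ((Real.toNNReal C : ℝ)) * max (t₀ + r - t₀) (t₀ - (t₀ - r)) ≤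
        (Real.toNNReal R : ℝ) - ((0 : NNReal) : ℝ)
      rw [hCc, hRc, NNReal.coe_zero, sub_zero, hmax]
      have hrR : r ≤ R / (C + 1) := min_le_right _ _
      have : C * r ≤ C * (R / (C + 1)) := mul_le_mul_of_nonneg_left hrR hC0
      calc C * r ≤ C * (R / (C + 1)) := this
        _ ≤ R := by
            rw [mul_div_assoc']
            rw [div_le_iff₀ (by linarith : (0:ℝ) < C + 1)]
            nlinarith
  obtain ⟨x, hxt₀, hx⟩ := hpl.exists_eq_forall_mem_Icc_hasDerivWithinAt₀
  exact ⟨r, hr0, hrρ, x, hxt₀, hx⟩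


/-- Auxiliary solution predicate on `[t,1]`. -/
def SolAux (F : ℝ → ℝ → ℝ) (lo hi : ℝ → ℝ) (b' t : ℝ) (y : ℝ → ℝ) : Prop :=
  ContinuousOn y (Icc t 1) ∧ y 1 = b' ∧
  (∀ s ∈ Ioo t 1, HasDerivAt y (F s (y s)) s) ∧
  HasDerivWithinAt y (F t (y t)) (Ici t) t ∧
  HasDerivWithinAt y (F 1 (y 1)) (Iic 1) 1 ∧
  (∀ s ∈ Icc t 1, lo s < y s ∧ y s < hi s)

lemma exists_backward_sol
    (h q : ℝ → ℝ) (c : ℝ)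
    (hh_cont : ContinuousOn h (Icc 0 1)) (hq_cont : ContinuousOn q (Icc 0 1))
    (hq_nonneg : ∀ t ∈ Icc (0:ℝ) 1, 0 ≤ q t)
    (lo hi : ℝ → ℝ) (b' : ℝ)
    (hlo_cont : ContinuousOn lo (Icc 0 1)) (hlo0 : lo 0 = 0)
    (hlo_der : ∀ s ∈ Ioo (0:ℝ) 1, ∃ d, HasDerivAt lo d s ∧ h s - c - q s / lo s < d)
    (hhi_cont : ContinuousOn hi (Icc 0 1)) (hhi0 : hi 0 = 0)
    (hhi_der : ∀ s ∈ Ioo (0:ℝ) 1, ∃ d, HasDerivAt hi d s ∧ d < h s - c - q s / hi s)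
    (hhi_neg : ∀ s ∈ Ioo (0:ℝ) 1, hi s < 0)
    (hlo1 : lo 1 < b') (hhi1 : b' < hi 1) (hhi1neg : hi 1 < 0) :
    ∃ y : ℝ → ℝ, PC h q c y ∧ y 1 = b' := by
  -- clamped coefficient functions
  set cl : ℝ → ℝ := fun t => max 0 (min 1 t) with hcl
  have hcl_cont : Continuous cl := continuous_const.max (continuous_const.min continuous_id)
  have hcl_mem : ∀ t, cl t ∈ Icc (0:ℝ) 1 :=
    fun t => ⟨le_max_left _ _, max_le zero_le_one (min_le_left _ _)⟩
  have hcl_eq : ∀ t ∈ Icc (0:ℝ) 1, cl t = t := by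
    intro t ht
    simp only [hcl]
    rw [min_eq_right ht.2, max_eq_right ht.1]
  set H : ℝ → ℝ := fun t => h (cl t) with hHdef
  set Q : ℝ → ℝ := fun t => q (cl t) with hQdef
  have hH : Continuous H := hh_cont.comp_continuous hcl_cont hcl_mem
  have hQ : Continuous Q := hq_cont.comp_continuous hcl_cont hcl_mem
  obtain ⟨Mh, hMh'⟩ := isCompact_Icc.exists_bound_of_continuousOn hh_cont
  obtain ⟨MQ, hMQ'⟩ := isCompact_Icc.exists_bound_of_continuousOn hq_cont
  have hMh : ∀ t, |H t| ≤ Mh := fun t => hMh' _ (hcl_mem t)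
  have hMQ : ∀ t, |Q t| ≤ MQ := fun t => hMQ' _ (hcl_mem t)
  have hQnn : ∀ t, 0 ≤ Q t := fun t => hq_nonneg _ (hcl_mem t)
  set F : ℝ → ℝ → ℝ := fun t z => H t - c - Q t / z with hFdef
  have hFeq : ∀ s ∈ Icc (0:ℝ) 1, ∀ z : ℝ, F s z = h s - c - q s / z := by
    intro s hs z
    simp only [hFdef, hHdef, hQdef, hcl_eq s hs]
  have hb'neg : b' < 0 := lt_trans hhi1 hhi1neg
  -- lower bound for the field when z < 0
  set K0 : ℝ := Mh + |c| with hK0def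
  have hflow : ∀ t : ℝ, ∀ z : ℝ, z < 0 → -K0 ≤ F t z := by
    intro t z hz
    have h1 : 0 ≤ Q t / (-z) := div_nonneg (hQnn t) (by linarith)
    have h2 : Q t / z = -(Q t / (-z)) := by rw [div_neg, neg_neg]
    have := hMh t
    have h3 : -Mh ≤ H t := by cases abs_le.1 (hMh t); linarith
    simp only [hFdef]
    rw [h2]
    have : -|c| ≤ -c := by cases abs_le.1 (le_refl |c|); linarith [le_abs_self c, neg_abs_le c]
    linarith [neg_abs_le c, le_abs_self c]
  -- barrier argument
  have barrier : ∀ a : ℝ, 0 < a → a < 1 → ∀ y : ℝ → ℝ, ContinuousOn y (Icc a 1) → y 1 = b' →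
      (∀ s ∈ Ico a 1, HasDerivWithinAt y (F s (y s)) (Ici s) s) →
      ∀ s ∈ Icc a 1, lo s < y s ∧ y s < hi s := by
    intro a ha0 ha1 y hycont hy1 hyder s hs
    constructor
    · have := barrier_pos (D := fun u => y u - lo u) ha1
        (hycont.sub (hlo_cont.mono (Icc_subset_Icc (le_of_lt ha0) le_rfl)))
        (by show (0:ℝ) < y 1 - lo 1; rw [hy1]; linarith)
        ?_ s hs
      · have h' : 0 < y s - lo s := this
        linarith
      · intro u hu hu0
        have hu0' : y u - lo u = 0 := hu0
        have huI : u ∈ Ioo (0:ℝ) 1 := ⟨lt_of_lt_of_le ha0 hu.1, hu.2⟩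
        obtain ⟨d, hd, hdlt⟩ := hlo_der u huI
        have hyu : y u = lo u := by linarith
        refine ⟨F u (y u) - d, (hyder u hu).sub hd.hasDerivWithinAt, ?_⟩
        rw [hFeq u ⟨le_of_lt huI.1, le_of_lt huI.2⟩, hyu]
        linarith
    · have := barrier_pos (D := fun u => hi u - y u) ha1
        ((hhi_cont.mono (Icc_subset_Icc (le_of_lt ha0) le_rfl)).sub hycont)
        (by show (0:ℝ) < hi 1 - y 1; rw [hy1]; linarith)
        ?_ s hs
      · have h' : 0 < hi s - y s := this
        linarith
      · intro u hu hu0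
        have hu0' : hi u - y u = 0 := hu0
        have huI : u ∈ Ioo (0:ℝ) 1 := ⟨lt_of_lt_of_le ha0 hu.1, hu.2⟩
        obtain ⟨d, hd, hdlt⟩ := hhi_der u huI
        have hyu : hi u = y u := by linarith
        refine ⟨d - F u (y u), hd.hasDerivWithinAt.sub (hyder u hu), ?_⟩
        rw [hFeq u ⟨le_of_lt huI.1, le_of_lt huI.2⟩, ← hyu]
        linarith
  -- get `Ici`-derivatives within a PL interval
  have memIci : ∀ a b x' : ℝ, a < b → Icc a b ∈ 𝓝[Ici a] a := by
    intro a b x' hab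
    exact Icc_mem_nhdsGE_of_mem ⟨le_rfl, hab⟩
  set S : Set ℝ := {t | 0 < t ∧ t < 1 ∧ ∃ y, SolAux F lo hi b' t y} with hSdef
  have hSup : ∀ t ∈ S, ∀ t' : ℝ, t ≤ t' → t' < 1 → t' ∈ S := by
    rintro t ⟨ht0, ht1, y, hy⟩ t' htt' ht'1
    refine ⟨lt_of_lt_of_le ht0 htt', ht'1, y, ?_⟩
    obtain ⟨hc, h1, hIoo, hIci, hIic, hbnd⟩ := hy
    refine ⟨hc.mono (Icc_subset_Icc htt' le_rfl), h1,
      fun s hs => hIoo s ⟨lt_of_le_of_lt htt' hs.1, hs.2⟩, ?_, hIic,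
      fun s hs => hbnd s ⟨le_trans htt' hs.1, hs.2⟩⟩
    rcases eq_or_lt_of_le htt' with rfl | hlt
    · exact hIci
    · exact (hIoo t' ⟨hlt, ht'1⟩).hasDerivWithinAt
  -- a freshly produced PL solution on `[t₀-r, t₀+r]` gives a `SolAux` after gluing; we
  -- first handle the seed at `t₀ = 1`.
  have hSne : S.Nonempty := by
    obtain ⟨r, hr0, hrρ, x, hxt0, hx⟩ := pl_step hH hQ hMh hMQ 1 b' (1/2) hb'neg (by norm_num)
    have hsub : Icc (1 - r) 1 ⊆ Icc (1 - r) (1 + r) := Icc_subset_Icc le_rfl (by linarith)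
    have hxcont : ContinuousOn x (Icc (1 - r) (1 + r)) :=
      fun s hs => (hx s hs).continuousWithinAt
    have hr1 : 0 < 1 - r := by linarith
    have hIci1 : ∀ s ∈ Ico (1 - r) 1, HasDerivWithinAt x (F s (x s)) (Ici s) s := by
      intro s hs
      rcases eq_or_lt_of_le hs.1 with heq | hlt
      · have hmem : Icc (1 - r) (1 + r) ∈ 𝓝[Ici s] s := by
          rw [← heq]; exact Icc_mem_nhdsGE_of_mem ⟨le_rfl, by linarith⟩
        exact (hx s (hsub ⟨hs.1, le_of_lt hs.2⟩)).mono_of_mem_nhdsWithin hmem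
      · exact ((hx s (hsub ⟨hs.1, le_of_lt hs.2⟩)).hasDerivAt
          (Icc_mem_nhds (by linarith) (by linarith [hs.2]))).hasDerivWithinAt
    have hx1 : x 1 = b' := hxt0
    have hbnd := barrier (1 - r) hr1 (by linarith) x (hxcont.mono hsub) hx1 hIci1
    refine ⟨1 - r, hr1, by linarith, x, hxcont.mono hsub, hx1, ?_, ?_, ?_, hbnd⟩
    · intro s hs
      exact (hx s (hsub ⟨le_of_lt hs.1, le_of_lt hs.2⟩)).hasDerivAt
        (Icc_mem_nhds (by linarith [hs.1]) (by linarith [hs.2]))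
    · exact hIci1 (1 - r) ⟨le_rfl, by linarith⟩
    · have hmem : Icc (1 - r) (1 + r) ∈ 𝓝[Iic 1] 1 :=
        Icc_mem_nhdsLE_of_mem ⟨by linarith, by linarith⟩
      exact (hx 1 ⟨by linarith, by linarith⟩).mono_of_mem_nhdsWithin hmem
  classical
  set τ : ℝ := sInf S with hτdef
  have hbdd : BddBelow S := ⟨0, fun t ht => le_of_lt ht.1⟩
  obtain ⟨tb, htb⟩ := id hSne
  have hτ0 : 0 ≤ τ := le_csInf hSne fun t ht => le_of_lt ht.1
  have hτ1 : τ < 1 := lt_of_le_of_lt (csInf_le hbdd htb) htb.2.1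
  have hSint : ∀ t : ℝ, τ < t → t < 1 → t ∈ S := by
    intro t htτ ht1
    obtain ⟨t₀, ht₀S, ht₀lt⟩ := (csInf_lt_iff hbdd hSne).1 htτ
    exact hSup t₀ ht₀S t (le_of_lt ht₀lt) ht1
  set Ysel : ℝ → ℝ → ℝ := fun t => if ht : t ∈ S then Classical.choose ht.2.2 else 0
    with hYseldef
  have hYsel : ∀ t, t ∈ S → SolAux F lo hi b' t (Ysel t) := by
    intro t ht
    simp only [hYseldef, dif_pos ht]
    exact Classical.choose_spec ht.2.2
  have huniq : ∀ t₁, t₁ ∈ S → ∀ t₂, t₂ ∈ S → t₁ ≤ t₂ →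
      EqOn (Ysel t₁) (Ysel t₂) (Icc t₂ 1) := by
    intro t₁ h₁ t₂ h₂ h12
    obtain ⟨σm, hσmem, hσmax⟩ := isCompact_Icc.exists_isMaxOn
      (nonempty_Icc.2 (le_of_lt h₂.2.1))
      (hhi_cont.mono (Icc_subset_Icc (le_of_lt h₂.1) le_rfl))
    have hσneg : hi σm < 0 := by
      rcases eq_or_lt_of_le hσmem.2 with h1 | h1
      · rw [h1]; exact hhi1neg
      · exact hhi_neg σm ⟨lt_of_lt_of_le h₂.1 hσmem.1, h1⟩
    set δ : ℝ := -hi σm with hδdef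
    have hδ0 : 0 < δ := by simp only [hδdef]; linarith
    have hy₁ := hYsel t₁ h₁
    have hy₂ := hYsel t₂ h₂
    have derof : ∀ (t : ℝ) (y : ℝ → ℝ), SolAux F lo hi b' t y → t ≤ t₂ →
        ∀ s ∈ Ioc t₂ 1, HasDerivWithinAt y (F s (y s)) (Iic s) s := by
      intro t y hy htt₂ s hs
      rcases eq_or_lt_of_le hs.2 with h1 | h1
      · subst h1; exact hy.2.2.2.2.1
      · exact (hy.2.2.1 s ⟨lt_of_le_of_lt htt₂ hs.1, h1⟩).hasDerivWithinAt
    have memof : ∀ (t : ℝ) (y : ℝ → ℝ), SolAux F lo hi b' t y → t ≤ t₂ →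
        ∀ s ∈ Ioc t₂ 1, y s ∈ Iic (-δ) := by
      intro t y hy htt₂ s hs
      have hb := (hy.2.2.2.2.2 s ⟨le_trans htt₂ (le_of_lt hs.1), hs.2⟩).2
      have hm := hσmax (⟨le_of_lt hs.1, hs.2⟩ : s ∈ Icc t₂ 1)
      rw [mem_Iic, hδdef, neg_neg]
      exact le_of_lt (lt_of_lt_of_le hb hm)
    exact ODE_solution_unique_of_mem_Icc_left
      (fun t _ => lipschitz_field hδ0 (hMQ t))
      (hy₁.1.mono (Icc_subset_Icc h12 le_rfl))
      (derof t₁ _ hy₁ h12) (memof t₁ _ hy₁ h12)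
      hy₂.1 (derof t₂ _ hy₂ le_rfl) (memof t₂ _ hy₂ le_rfl)
      (by rw [hy₁.2.1, hy₂.2.1])
  -- glued maximal solution on (τ, 1]
  set m : ℝ → ℝ := fun s => (τ + s) / 2 with hmdef
  have hmlt : ∀ s, τ < s → m s < s := by intro s h; simp only [hmdef]; linarith
  have hmgt : ∀ s, τ < s → τ < m s := by intro s h; simp only [hmdef]; linarith
  have hmS : ∀ s, τ < s → s ≤ 1 → m s ∈ S := by
    intro s h1 h2
    exact hSint _ (hmgt s h1) (by simp only [hmdef]; linarith)
  set Y : ℝ → ℝ := fun s => Ysel (m s) s with hYdef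
  have hYeq : ∀ t, t ∈ S → ∀ s, t ≤ s → s ≤ 1 → τ < s → Y s = Ysel t s := by
    intro t ht s hts hs1 hτs
    have hm : m s ∈ S := hmS s hτs hs1
    have hms : m s ≤ s := le_of_lt (hmlt s hτs)
    rcases le_total t (m s) with hc | hc
    · exact (huniq t ht (m s) hm hc ⟨hms, hs1⟩).symm
    · exact huniq (m s) hm t ht hc ⟨hts, hs1⟩
  have hYeqIcc : ∀ s, τ < s → s ≤ 1 → EqOn Y (Ysel (m s)) (Icc (m s) 1) := by
    intro s h1 h2 σ hσ
    exact hYeq (m s) (hmS s h1 h2) σ hσ.1 hσ.2 (lt_of_lt_of_le (hmgt s h1) hσ.1)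
  have hY1 : Y 1 = b' := (hYsel _ (hmS 1 hτ1 le_rfl)).2.1
  have hYder : ∀ s ∈ Ioo τ 1, HasDerivAt Y (F s (Y s)) s := by
    intro s hs
    have hm := hmS s hs.1 (le_of_lt hs.2)
    have hder := (hYsel _ hm).2.2.1 s ⟨hmlt s hs.1, hs.2⟩
    have heq : Y =ᶠ[𝓝 s] Ysel (m s) := by
      filter_upwards [Ioo_mem_nhds (hmlt s hs.1) hs.2] with σ hσ
      exact hYeqIcc s hs.1 (le_of_lt hs.2) ⟨le_of_lt hσ.1, le_of_lt hσ.2⟩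
    exact hder.congr_of_eventuallyEq heq
  have hYcont : ContinuousOn Y (Ioc τ 1) := by
    intro s hs
    have hm := hmS s hs.1 hs.2
    have hc := (hYsel _ hm).1.continuousWithinAt
      (⟨le_of_lt (hmlt s hs.1), hs.2⟩ : s ∈ Icc (m s) 1)
    have hsub : Ioc τ 1 ∩ Ioi (m s) ⊆ Icc (m s) 1 := fun σ hσ => ⟨le_of_lt hσ.2, hσ.1.2⟩
    rw [← continuousWithinAt_inter (Ioi_mem_nhds (hmlt s hs.1))]
    exact ((hc.mono hsub).congr
      (fun σ hσ => hYeqIcc s hs.1 hs.2 ⟨le_of_lt hσ.2, hσ.1.2⟩) rfl)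
  have hYbnd : ∀ s ∈ Ioc τ 1, lo s < Y s ∧ Y s < hi s := by
    intro s hs
    exact (hYsel _ (hmS s hs.1 hs.2)).2.2.2.2.2 s ⟨le_of_lt (hmlt s hs.1), hs.2⟩
  have hYIic : HasDerivWithinAt Y (F 1 (Y 1)) (Iic 1) 1 := by
    have hm := hmS 1 hτ1 le_rfl
    have hIic := (hYsel _ hm).2.2.2.2.1
    refine hIic.congr_of_eventuallyEq ?_ rfl
    have hmem : Iic 1 ∩ Ioi (m 1) ∈ 𝓝[Iic 1] (1:ℝ) :=
      inter_mem_nhdsWithin _ (Ioi_mem_nhds (hmlt 1 hτ1))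
    filter_upwards [hmem] with σ hσ
    exact hYeqIcc 1 hτ1 le_rfl ⟨le_of_lt hσ.2, hσ.1⟩
  have hK0nn : 0 ≤ K0 := add_nonneg (le_trans (abs_nonneg _) (hMh 0)) (abs_nonneg c)
  -- the infimum of admissible left endpoints is 0
  have hτzero : τ = 0 := by
    by_contra hτne
    have hτpos : 0 < τ := lt_of_le_of_ne hτ0 (Ne.symm hτne)
    -- limit of Y from the right at τ, via monotonicity of Y + K0 * s
    have hW : MonotoneOn (fun s => Y s + K0 * s) (Ioo τ 1) := by
      apply monotoneOn_of_deriv_nonneg (convex_Ioo τ 1)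
      · exact (hYcont.mono Ioo_subset_Ioc_self).add
          (continuous_const.mul continuous_id).continuousOn
      · intro s hs
        rw [interior_Ioo] at hs
        exact ((hYder s hs).add ((hasDerivAt_id s).const_mul K0)).differentiableAt.differentiableWithinAt
      · intro s hs
        rw [interior_Ioo] at hs
        have hd : HasDerivAt (fun u => Y u + K0 * u) (F s (Y s) + K0 * 1) s :=
          (hYder s hs).add ((hasDerivAt_id s).const_mul K0)
        rw [hd.deriv]
        have hYneg : Y s < 0 :=
          lt_trans (hYbnd s (Ioo_subset_Ioc_self hs)).2
            (hhi_neg s ⟨lt_of_le_of_lt hτ0 hs.1, hs.2⟩)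
        have := hflow s (Y s) hYneg
        linarith
    obtain ⟨Ml, hMl⟩ := isCompact_Icc.exists_bound_of_continuousOn hlo_cont
    have hbdd2 : BddBelow ((fun s => Y s + K0 * s) '' Ioo τ 1) := by
      refine ⟨-Ml, ?_⟩
      rintro _ ⟨s, hs, rfl⟩
      have h1 : lo s < Y s := (hYbnd s (Ioo_subset_Ioc_self hs)).1
      have h2 : ‖lo s‖ ≤ Ml := hMl s ⟨le_trans hτ0 (le_of_lt hs.1), le_of_lt hs.2⟩
      rw [Real.norm_eq_abs] at h2
      have h3 : 0 ≤ K0 * s := mul_nonneg hK0nn (le_trans hτ0 (le_of_lt hs.1))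
      have := abs_le.1 h2
      simp only []
      linarith [this.1]
    have hlim := hW.tendsto_nhdsWithin_Ioo_right (nonempty_Ioo.2 hτ1) hbdd2
    set Yτ : ℝ := sInf ((fun s => Y s + K0 * s) '' Ioo τ 1) - K0 * τ with hYτdef
    have hYlim : Tendsto Y (𝓝[>] τ) (𝓝 Yτ) := by
      have h2 : Tendsto (fun s : ℝ => K0 * s) (𝓝[>] τ) (𝓝 (K0 * τ)) :=
        ((continuous_const.mul continuous_id).tendsto τ).mono_left nhdsWithin_le_nhds
      have h3 := hlim.sub h2
      have heq : (fun s => (Y s + K0 * s) - K0 * s) = Y := by funext u; ring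
      rwa [heq] at h3
    -- extension of Y to τ
    set Yb : ℝ → ℝ := fun s => if s ≤ τ then Yτ else Y s with hYbdef
    have hYbeq : ∀ s, τ < s → Yb s = Y s := fun s hs => if_neg (not_le.2 hs)
    have hYbτ : Yb τ = Yτ := if_pos le_rfl
    have hYbcont : ContinuousOn Yb (Icc τ 1) := by
      intro s hs
      rcases eq_or_lt_of_le hs.1 with heq | hlt
      · subst heq
        rw [ContinuousWithinAt, ← Ioc_insert_left (le_of_lt hτ1), nhdsWithin_insert, hYbτ]
        rw [tendsto_sup]
        constructor
        · rw [tendsto_pure_left]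
          intro u hu
          rw [hYbτ]
          exact mem_of_mem_nhds hu
        · have h4 : Tendsto Y (𝓝[Ioc τ 1] τ) (𝓝 Yτ) :=
            hYlim.mono_left (nhdsWithin_mono τ Ioc_subset_Ioi_self)
          refine h4.congr' ?_
          filter_upwards [self_mem_nhdsWithin] with σ hσ
          exact (hYbeq σ hσ.1).symm
      · rw [← continuousWithinAt_inter (Ioi_mem_nhds hlt)]
        have hsub : Icc τ 1 ∩ Ioi τ = Ioc τ 1 := by
          ext u; simp only [mem_inter_iff, mem_Icc, mem_Ioi, mem_Ioc]
          constructor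
          · rintro ⟨⟨_, h2⟩, h3⟩; exact ⟨h3, h2⟩
          · rintro ⟨h1', h2⟩; exact ⟨⟨le_of_lt h1', h2⟩, h1'⟩
        rw [hsub]
        exact (hYcont s ⟨hlt, hs.2⟩).congr (fun σ hσ => hYbeq σ hσ.1) (hYbeq s hlt)
    have hYbder : ∀ σ, τ < σ → σ < 1 → HasDerivAt Yb (F σ (Yb σ)) σ := by
      intro σ h1 h2
      have h3 := (hYder σ ⟨h1, h2⟩).congr_of_eventuallyEq
        (by filter_upwards [Ioi_mem_nhds h1] with u hu; exact hYbeq u hu)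
      rwa [hYbeq σ h1]
    -- bounds at τ
    have hloτ : lo τ ≤ Yτ := by
      have h1 : Tendsto lo (𝓝[>] τ) (𝓝 (lo τ)) :=
        ((hlo_cont.continuousAt (Icc_mem_nhds hτpos hτ1)).tendsto).mono_left nhdsWithin_le_nhds
      refine le_of_tendsto_of_tendsto h1 hYlim ?_
      filter_upwards [Ioc_mem_nhdsGT_of_mem (⟨le_rfl, hτ1⟩ : τ ∈ Ico τ 1)] with σ hσ
      exact le_of_lt (hYbnd σ hσ).1
    have hhiτ : Yτ ≤ hi τ := by
      have h1 : Tendsto hi (𝓝[>] τ) (𝓝 (hi τ)) :=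
        ((hhi_cont.continuousAt (Icc_mem_nhds hτpos hτ1)).tendsto).mono_left nhdsWithin_le_nhds
      refine le_of_tendsto_of_tendsto hYlim h1 ?_
      filter_upwards [Ioc_mem_nhdsGT_of_mem (⟨le_rfl, hτ1⟩ : τ ∈ Ico τ 1)] with σ hσ
      exact le_of_lt (hYbnd σ hσ).2
    have hYτneg : Yτ < 0 := lt_of_le_of_lt hhiτ (hhi_neg τ ⟨hτpos, hτ1⟩)
    have hYbneg : ∀ s ∈ Icc τ 1, Yb s < 0 := by
      intro s hs
      rcases eq_or_lt_of_le hs.1 with heq | hlt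
      · rw [← heq, hYbτ]; exact hYτneg
      · rw [hYbeq s hlt]
        rcases eq_or_lt_of_le hs.2 with h1 | h1
        · rw [h1, hY1]; exact hb'neg
        · exact lt_trans (hYbnd s ⟨hlt, hs.2⟩).2 (hhi_neg s ⟨lt_trans hτpos hlt, h1⟩)
    -- right derivative of Yb at τ via the integral representation
    set gY : ℝ → ℝ := fun s => F s (Yb s) with hgYdef
    have hgYcont : ContinuousOn gY (Icc τ 1) := by
      have heq : gY = fun s => (H s - c) - Q s / Yb s := rfl
      rw [heq]
      exact (hH.continuousOn.sub continuousOn_const).sub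
        (hQ.continuousOn.div hYbcont fun s hs => ne_of_lt (hYbneg s hs))
    have hint : IntervalIntegrable gY volume τ 1 := by
      apply ContinuousOn.intervalIntegrable
      rwa [uIcc_of_le (le_of_lt hτ1)]
    have hrep : ∀ s ∈ Icc τ 1, Yb s = b' - ∫ u in s..1, gY u := by
      intro s hs
      have h1 : ∫ u in s..1, gY u = Yb 1 - Yb s := by
        apply intervalIntegral.integral_eq_sub_of_hasDeriv_right_of_le hs.2
          (hYbcont.mono (Icc_subset_Icc hs.1 le_rfl))
        · intro u hu
          have hτu : τ < u := lt_of_le_of_lt hs.1 hu.1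
          exact ((hYbder u hτu hu.2).hasDerivWithinAt : HasDerivWithinAt Yb (gY u) (Ioi u) u)
        · apply ContinuousOn.intervalIntegrable
          rw [uIcc_of_le hs.2]
          exact hgYcont.mono (Icc_subset_Icc hs.1 le_rfl)
      have hYb1 : Yb 1 = b' := by rw [hYbeq 1 hτ1, hY1]
      rw [h1, hYb1]; ring
    have hIciτ : HasDerivWithinAt Yb (gY τ) (Ici τ) τ := by
      have hmeas : StronglyMeasurableAtFilter gY (𝓝[>] τ) volume := by
        refine ⟨Ioc τ 1, Ioc_mem_nhdsGT_of_mem ⟨le_rfl, hτ1⟩, ?_⟩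
        exact (hgYcont.mono Ioc_subset_Icc_self).aestronglyMeasurable measurableSet_Ioc
      have hcw : ContinuousWithinAt gY (Ioi τ) τ := by
        apply (hgYcont.continuousWithinAt (left_mem_Icc.2 (le_of_lt hτ1))).mono_of_mem_nhdsWithin
        exact mem_of_superset (inter_mem_nhdsWithin (Ioi τ) (Iic_mem_nhds hτ1))
          fun u hu => ⟨le_of_lt hu.1, hu.2⟩
      have hFTC := intervalIntegral.integral_hasDerivWithinAt_left (s := Ici τ) (t := Ioi τ) hint hmeas hcw
      have hΨ : HasDerivWithinAt (fun u => b' - ∫ x in u..1, gY x) (gY τ) (Ici τ) τ := by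
        have h5 := hFTC.const_sub b'
        simpa using h5
      have hmem : Icc τ 1 ∈ 𝓝[Ici τ] τ := Icc_mem_nhdsGE_of_mem ⟨le_rfl, hτ1⟩
      exact ((hΨ.mono Icc_subset_Ici_self).congr (fun σ hσ => hrep σ hσ)
        (hrep τ (left_mem_Icc.2 (le_of_lt hτ1)))).mono_of_mem_nhdsWithin hmem
    -- Picard–Lindelöf extension to the left of τ
    obtain ⟨r, hr0, hrρ, x, hxτ, hx⟩ := pl_step hH hQ hMh hMQ τ Yτ (min (τ/2) ((1-τ)/2))
      hYτneg (lt_min (by linarith) (by linarith))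
    have hrτ : r ≤ τ/2 := le_trans hrρ (min_le_left _ _)
    have hr1' : r ≤ (1-τ)/2 := le_trans hrρ (min_le_right _ _)
    have hτr0 : 0 < τ - r := by linarith
    have hτr1 : τ + r < 1 := by linarith
    set R₀ : ℝ := -Yτ / 2 with hR₀def
    have hR₀0 : 0 < R₀ := by simp only [hR₀def]; linarith
    have hcax : ContinuousAt x τ :=
      ((hx τ ⟨by linarith, by linarith⟩).hasDerivAt
        (Icc_mem_nhds (by linarith) (by linarith))).continuousAt
    have hev1 : ∀ᶠ σ in 𝓝 τ, |x σ - Yτ| < R₀ := by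
      have hc2 : Tendsto (fun σ => |x σ - Yτ|) (𝓝 τ) (𝓝 |x τ - Yτ|) :=
        ((hcax.sub continuousAt_const).abs).tendsto
      rw [hxτ, sub_self, abs_zero] at hc2
      exact hc2.eventually_lt_const hR₀0
    have hev2 : ∀ᶠ σ in 𝓝 τ, σ ∈ Icc τ 1 → |Yb σ - Yτ| < R₀ := by
      have hc2 : Tendsto (fun σ => |Yb σ - Yτ|) (𝓝[Icc τ 1] τ) (𝓝 |Yb τ - Yτ|) :=
        ((hYbcont.continuousWithinAt (left_mem_Icc.2 (le_of_lt hτ1))).sub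
          continuousWithinAt_const).abs
      rw [hYbτ, sub_self, abs_zero] at hc2
      have := hc2.eventually_lt_const hR₀0
      rwa [eventually_nhdsWithin_iff] at this
    obtain ⟨η, hη0, hη⟩ := Metric.eventually_nhds_iff.1 (hev1.and hev2)
    set ρ₂ : ℝ := min (η/2) r with hρ₂def
    have hρ₂0 : 0 < ρ₂ := lt_min (by linarith) hr0
    have hρ₂r : ρ₂ ≤ r := min_le_right _ _
    have hρ₂η : ρ₂ ≤ η/2 := min_le_left _ _
    have hball : ∀ σ ∈ Icc τ (τ + ρ₂), |x σ - Yτ| ≤ R₀ ∧ |Yb σ - Yτ| ≤ R₀ := by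
      intro σ hσ
      have hd : dist σ τ < η := by
        rw [Real.dist_eq, abs_of_nonneg (by linarith [hσ.1] : (0:ℝ) ≤ σ - τ)]
        linarith [hσ.2]
      have h6 := hη hd
      exact ⟨le_of_lt h6.1, le_of_lt (h6.2 ⟨hσ.1, by linarith [hσ.2]⟩)⟩
    have hballsub : Metric.closedBall Yτ R₀ ⊆ Iic (-R₀) := by
      intro z hz
      rw [Real.closedBall_eq_Icc] at hz
      rw [mem_Iic]
      have : Yτ + R₀ = -R₀ := by rw [hR₀def]; ring
      linarith [hz.2]
    have hmatch : EqOn x Yb (Icc τ (τ + ρ₂)) := by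
      apply ODE_solution_unique_of_mem_Icc_right
        (v := F) (s := fun _ => Metric.closedBall Yτ R₀)
        (fun t _ => (lipschitz_field hR₀0 (hMQ t)).mono hballsub)
      · exact fun σ hσ => (hx σ ⟨by linarith [hσ.1], by linarith [hσ.2]⟩).continuousWithinAt.mono
          (Icc_subset_Icc (by linarith) (by linarith))
      · intro σ hσ
        exact ((hx σ ⟨by linarith [hσ.1], by linarith [hσ.2, hρ₂r]⟩).hasDerivAt
          (Icc_mem_nhds (by linarith [hσ.1]) (by linarith [hσ.2]))).hasDerivWithinAt
      · intro σ hσ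
        rw [Metric.mem_closedBall, Real.dist_eq]
        exact (hball σ ⟨hσ.1, le_of_lt hσ.2⟩).1
      · exact hYbcont.mono (Icc_subset_Icc le_rfl (by linarith))
      · intro σ hσ
        rcases eq_or_lt_of_le hσ.1 with heq | hlt
        · rw [← heq]
          exact hIciτ
        · exact (hYbder σ hlt (by linarith [hσ.2])).hasDerivWithinAt
      · intro σ hσ
        rw [Metric.mem_closedBall, Real.dist_eq]
        exact (hball σ ⟨hσ.1, le_of_lt hσ.2⟩).2
      · rw [hxτ, hYbτ]
    -- glue the local solution with Yb
    set yn : ℝ → ℝ := fun s => if s < τ then x s else Yb s with hyndef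
    have hyn1 : ∀ s, τ ≤ s → yn s = Yb s := fun s hs => if_neg (not_lt.2 hs)
    have hynx : EqOn yn x (Icc (τ - r) (τ + ρ₂)) := by
      intro σ hσ
      rcases lt_or_ge σ τ with hcase | hcase
      · simp only [hyndef, if_pos hcase]
      · rw [hyn1 σ hcase]
        exact (hmatch ⟨hcase, hσ.2⟩).symm
    have hyncont : ContinuousOn yn (Icc (τ - r) 1) := by
      intro s hs
      rcases lt_or_ge s (τ + ρ₂) with hcase | hcase
      · rw [← continuousWithinAt_inter (Iio_mem_nhds hcase)]
        have hxc : ContinuousWithinAt x (Icc (τ - r) (τ + r)) s :=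
          (hx s ⟨hs.1, by linarith⟩).continuousWithinAt
        have hsub : Icc (τ - r) 1 ∩ Iio (τ + ρ₂) ⊆ Icc (τ - r) (τ + r) :=
          fun σ hσ => ⟨hσ.1.1, by have := hσ.2; simp only [mem_Iio] at this; linarith⟩
        exact (hxc.mono hsub).congr
          (fun σ hσ => hynx ⟨hσ.1.1, le_of_lt hσ.2⟩) (hynx ⟨hs.1, le_of_lt hcase⟩)
      · have hτs : τ < s := lt_of_lt_of_le (by linarith) hcase
        rw [← continuousWithinAt_inter (Ioi_mem_nhds hτs)]
        have hsub : Icc (τ - r) 1 ∩ Ioi τ ⊆ Icc τ 1 := fun σ hσ => ⟨le_of_lt hσ.2, hσ.1.2⟩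
        exact ((hYbcont.continuousWithinAt ⟨le_of_lt hτs, hs.2⟩).mono hsub).congr
          (fun σ hσ => hyn1 σ (le_of_lt hσ.2)) (hyn1 s (le_of_lt hτs))
    have hynder : ∀ s ∈ Ioo (τ - r) 1, HasDerivAt yn (F s (yn s)) s := by
      intro s hs
      rcases lt_or_ge s (τ + ρ₂) with hcase | hcase
      · have hmem : Icc (τ - r) (τ + r) ∈ 𝓝 s := Icc_mem_nhds hs.1 (by linarith)
        have hxd := (hx s ⟨le_of_lt hs.1, by linarith⟩).hasDerivAt hmem
        have heq : yn =ᶠ[𝓝 s] x := by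
          filter_upwards [Ioo_mem_nhds hs.1 hcase] with σ hσ
          exact hynx ⟨le_of_lt hσ.1, le_of_lt hσ.2⟩
        have h7 := hxd.congr_of_eventuallyEq heq
        rw [hynx ⟨le_of_lt hs.1, le_of_lt hcase⟩]
        exact h7
      · have hτs : τ < s := lt_of_lt_of_le (by linarith) hcase
        have hYbd := hYbder s hτs hs.2
        have heq : yn =ᶠ[𝓝 s] Yb := by
          filter_upwards [Ioi_mem_nhds hτs] with σ hσ
          exact hyn1 σ (le_of_lt hσ)
        have h7 := hYbd.congr_of_eventuallyEq heq
        rw [hyn1 s (le_of_lt hτs)]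
        exact h7
    have hynIci : HasDerivWithinAt yn (F (τ - r) (yn (τ - r))) (Ici (τ - r)) (τ - r) := by
      have h1 := hx (τ - r) ⟨le_rfl, by linarith⟩
      have h2 : Icc (τ - r) (τ + ρ₂) ⊆ Icc (τ - r) (τ + r) :=
        Icc_subset_Icc le_rfl (by linarith)
      have h3 := (h1.mono h2).congr (fun σ hσ => hynx hσ)
        (hynx ⟨le_rfl, by linarith⟩)
      have h4 : Icc (τ - r) (τ + ρ₂) ∈ 𝓝[Ici (τ - r)] (τ - r) :=
        Icc_mem_nhdsGE_of_mem ⟨le_rfl, by linarith⟩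
      rw [hynx ⟨le_rfl, by linarith⟩]
      exact h3.mono_of_mem_nhdsWithin h4
    have hynIic : HasDerivWithinAt yn (F 1 (yn 1)) (Iic 1) 1 := by
      have hYb1der : HasDerivWithinAt Yb (F 1 (Yb 1)) (Iic 1) 1 := by
        rw [hYbeq 1 hτ1]
        refine hYIic.congr_of_eventuallyEq ?_ (hYbeq 1 hτ1)
        have hmem2 : Iic 1 ∩ Ioi τ ∈ 𝓝[Iic 1] (1:ℝ) :=
          inter_mem_nhdsWithin _ (Ioi_mem_nhds hτ1)
        filter_upwards [hmem2] with σ hσ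
        exact hYbeq σ hσ.2
      rw [hyn1 1 (le_of_lt hτ1)]
      refine hYb1der.congr_of_eventuallyEq ?_ (hyn1 1 (le_of_lt hτ1))
      have hmem2 : Iic 1 ∩ Ioi τ ∈ 𝓝[Iic 1] (1:ℝ) :=
        inter_mem_nhdsWithin _ (Ioi_mem_nhds hτ1)
      filter_upwards [hmem2] with σ hσ
      exact hyn1 σ (le_of_lt hσ.2)
    have hyn1' : yn 1 = b' := by rw [hyn1 1 (le_of_lt hτ1), hYbeq 1 hτ1, hY1]
    have hynIciAll : ∀ s ∈ Ico (τ - r) 1, HasDerivWithinAt yn (F s (yn s)) (Ici s) s := by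
      intro s hs
      rcases eq_or_lt_of_le hs.1 with heq | hlt
      · rw [← heq]; exact hynIci
      · exact (hynder s ⟨hlt, hs.2⟩).hasDerivWithinAt
    have hbar := barrier (τ - r) (by linarith) (by linarith) yn hyncont hyn1' hynIciAll
    have hmemS : τ - r ∈ S :=
      ⟨by linarith, by linarith, yn, hyncont, hyn1', hynder, hynIci, hynIic, hbar⟩
    have := csInf_le hbdd hmemS
    rw [← hτdef] at this
    linarith
  rw [hτzero] at hYder hYcont hYbnd
  set yf : ℝ → ℝ := fun s => if 0 < s then Y s else 0 with hyfdef
  have hyfY : ∀ s, 0 < s → yf s = Y s := fun s hs => if_pos hs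
  have hyf0 : yf 0 = 0 := if_neg (lt_irrefl 0)
  refine ⟨yf, ⟨⟨?_, ?_, ?_⟩, hyf0⟩, ?_⟩
  · -- continuity on [0,1]
    intro s hs
    rcases eq_or_lt_of_le hs.1 with heq | hlt
    · rw [← heq]
      rw [ContinuousWithinAt, hyf0, ← Ioc_insert_left zero_le_one, nhdsWithin_insert,
        tendsto_sup]
      constructor
      · rw [tendsto_pure_left]
        intro u hu
        rw [hyf0]
        exact mem_of_mem_nhds hu
      · have hlo' : Tendsto lo (𝓝[Ioc 0 1] 0) (𝓝 0) := by
          have h1 := hlo_cont.continuousWithinAt (left_mem_Icc.2 zero_le_one)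
          rw [ContinuousWithinAt, hlo0] at h1
          exact h1.mono_left (nhdsWithin_mono _ Ioc_subset_Icc_self)
        have hhi' : Tendsto hi (𝓝[Ioc 0 1] 0) (𝓝 0) := by
          have h1 := hhi_cont.continuousWithinAt (left_mem_Icc.2 zero_le_one)
          rw [ContinuousWithinAt, hhi0] at h1
          exact h1.mono_left (nhdsWithin_mono _ Ioc_subset_Icc_self)
        apply tendsto_of_tendsto_of_tendsto_of_le_of_le' hlo' hhi'
        · filter_upwards [self_mem_nhdsWithin] with σ hσ
          rw [hyfY σ hσ.1]
          exact le_of_lt (hYbnd σ hσ).1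
        · filter_upwards [self_mem_nhdsWithin] with σ hσ
          rw [hyfY σ hσ.1]
          exact le_of_lt (hYbnd σ hσ).2
    · rw [← continuousWithinAt_inter (Ioi_mem_nhds hlt)]
      have hsub : Icc (0:ℝ) 1 ∩ Ioi 0 ⊆ Ioc 0 1 := fun σ hσ => ⟨hσ.2, hσ.1.2⟩
      exact ((hYcont s ⟨hlt, hs.2⟩).mono hsub).congr
        (fun σ hσ => hyfY σ hσ.2) (hyfY s hlt)
  · -- the ODE on (0,1)
    intro s hs
    have hd := hYder s hs
    have heq : yf =ᶠ[𝓝 s] Y := by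
      filter_upwards [Ioi_mem_nhds hs.1] with σ hσ
      exact hyfY σ hσ
    have h2 := hd.congr_of_eventuallyEq heq
    rw [hyfY s hs.1, ← hFeq s ⟨le_of_lt hs.1, le_of_lt hs.2⟩]
    exact h2
  · -- negativity
    intro s hs
    rw [hyfY s hs.1]
    exact lt_trans (hYbnd s ⟨hs.1, le_of_lt hs.2⟩).2 (hhi_neg s hs)
  · rw [hyfY 1 one_pos]
    exact hY1

/-- the threshold β(c) is strictly decreasing for c > c* and
tends to −∞ as c → +∞. -/
theorem stmt_10 (f h q : ℝ → ℝ) (cstar : ℝ) (β : ℝ → ℝ)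
    (hq_cont : ContinuousOn q (Icc 0 1))
    (hq_pos : ∀ φ ∈ Ioo (0:ℝ) 1, 0 < q φ)
    (hq0 : q 0 = 0) (hq1 : q 1 = 0)
    (hq_lim : ∃ L : ℝ, ∀ᶠ φ in 𝓝[>] (0:ℝ), q φ / φ ≤ L)
    (hf0 : f 0 = 0)
    (hf' : ∀ x ∈ Icc (0:ℝ) 1, HasDerivWithinAt f (h x) (Icc 0 1) x)
    (hh_cont : ContinuousOn h (Icc 0 1))
    (hcstar : ∀ c : ℝ, (∃ z : ℝ → ℝ, PC00 h q c z) ↔ cstar ≤ c)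
    (hβ : ∀ c : ℝ, cstar < c → β c < 0 ∧
      ∀ b : ℝ, b < 0 → ((∃ z : ℝ → ℝ, PC h q c z ∧ z 1 = b) ↔ β c ≤ b)) :
    (∀ c₁ c₂ : ℝ, cstar < c₁ → c₁ < c₂ → β c₂ < β c₁) ∧
    Tendsto β atTop atBot := by
  have hq_nonneg : ∀ t ∈ Icc (0:ℝ) 1, 0 ≤ q t := by
    intro t ht
    rcases eq_or_lt_of_le ht.1 with h0 | h0
    · rw [← h0, hq0]
    · rcases eq_or_lt_of_le ht.2 with h1 | h1
      · rw [h1, hq1]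
      · exact le_of_lt (hq_pos t ⟨h0, h1⟩)
  have key : ∀ c₁ c₂ : ℝ, cstar < c₁ → c₁ < c₂ → β c₂ ≤ β c₁ - (c₂ - c₁) := by
    intro c₁ c₂ h1 h12
    obtain ⟨hβ1neg, hiff1⟩ := hβ c₁ h1
    have h2 : cstar < c₂ := lt_trans h1 h12
    obtain ⟨hβ2neg, hiff2⟩ := hβ c₂ h2
    have h3 : cstar < c₂ + 1 := by linarith
    obtain ⟨hβ3neg, hiff3⟩ := hβ (c₂ + 1) h3
    obtain ⟨z₁, hz₁PC, hz₁1⟩ := (hiff1 (β c₁) hβ1neg).2 le_rfl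
    have main : ∀ b' : ℝ, β c₁ - (c₂ - c₁) < b' → b' < 0 → β c₂ ≤ b' := by
      intro b' hb1 hb0
      set b'' : ℝ := max (β (c₂ + 1)) (b' / 2) with hb''def
      have hb''neg : b'' < 0 := max_lt hβ3neg (by linarith)
      obtain ⟨v, hvPC, hv1⟩ := (hiff3 b'' hb''neg).2 (le_max_left _ _)
      have hb'b'' : b' < b'' := lt_of_lt_of_le (by linarith) (le_max_right _ _)
      have hεpos : (0:ℝ) < c₂ - c₁ := by linarith
      have hlo_der' : ∀ s ∈ Ioo (0:ℝ) 1, ∃ d, HasDerivAt (fun u => z₁ u - (c₂ - c₁) * u) d s ∧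
          h s - c₂ - q s / (z₁ s - (c₂ - c₁) * s) < d := by
        intro s hs
        have hz := hz₁PC.1.2.1 s hs
        have hzneg := hz₁PC.1.2.2 s hs
        have hq' := hq_pos s hs
        refine ⟨(h s - c₁ - q s / z₁ s) - (c₂ - c₁) * 1,
          hz.sub ((hasDerivAt_id s).const_mul (c₂ - c₁)), ?_⟩
        have hwneg : z₁ s - (c₂ - c₁) * s < z₁ s := by
          have : 0 < (c₂ - c₁) * s := mul_pos hεpos hs.1
          linarith
        have hw0 : z₁ s - (c₂ - c₁) * s < 0 := lt_trans hwneg hzneg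
        have hdiff : q s / (z₁ s - (c₂ - c₁) * s) - q s / z₁ s
            = q s * ((c₂ - c₁) * s) / ((z₁ s - (c₂ - c₁) * s) * z₁ s) := by
          have h1' : z₁ s ≠ 0 := ne_of_lt hzneg
          have h2' : z₁ s - (c₂ - c₁) * s ≠ 0 := ne_of_lt hw0
          field_simp
          ring
        have hpos : 0 < q s * ((c₂ - c₁) * s) / ((z₁ s - (c₂ - c₁) * s) * z₁ s) := by
          apply div_pos (mul_pos hq' (mul_pos hεpos hs.1))
          exact mul_pos_of_neg_of_neg hw0 hzneg
        nlinarith [hdiff, hpos]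
      have hhi_der' : ∀ s ∈ Ioo (0:ℝ) 1, ∃ d, HasDerivAt v d s ∧
          d < h s - c₂ - q s / v s := by
        intro s hs
        exact ⟨h s - (c₂ + 1) - q s / v s, hvPC.1.2.1 s hs, by linarith⟩
      obtain ⟨y, hyPC, hy1⟩ := exists_backward_sol h q c₂ hh_cont hq_cont hq_nonneg
        (fun s => z₁ s - (c₂ - c₁) * s) v b'
        (hz₁PC.1.1.sub (continuous_const.mul continuous_id).continuousOn)
        (by show z₁ 0 - (c₂ - c₁) * 0 = 0; rw [hz₁PC.2]; ring)
        hlo_der'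
        hvPC.1.1 hvPC.2
        hhi_der'
        hvPC.1.2.2
        (by show z₁ 1 - (c₂ - c₁) * 1 < b'; rw [hz₁1]; linarith)
        (by rw [hv1]; exact hb'b'')
        (by rw [hv1]; exact hb''neg)
      exact (hiff2 b' hb0).1 ⟨y, hyPC, hy1⟩
    by_contra hcon
    push_neg at hcon
    have hb' : β c₁ - (c₂ - c₁) < (β c₁ - (c₂ - c₁) + β c₂) / 2 := by linarith
    have hb0 : (β c₁ - (c₂ - c₁) + β c₂) / 2 < 0 := by linarith
    have := main _ hb' hb0
    linarith
  constructor
  · intro c₁ c₂ h1 h12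
    have := key c₁ c₂ h1 h12
    linarith
  · have h0 : cstar < cstar + 1 := lt_add_one cstar
    refine tendsto_atBot_mono' atTop (f₁ := fun c => β (cstar+1) + (cstar+1) + -c) ?_ ?_
    · filter_upwards [eventually_gt_atTop (cstar + 1)] with c hc
      have := key (cstar + 1) c h0 hc
      exact le_trans this (by linarith : β (cstar+1) - (c - (cstar+1)) ≤ β (cstar+1) + (cstar+1) + -c)
    · have h1 : Tendsto (fun c : ℝ => -c) atTop atBot := tendsto_neg_atTop_atBot
      exact tendsto_atBot_add_const_left _ _ h1
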